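/- arXiv:0906.2100 — 5 statements merged into one kernel-verified Lean document; each statement's English description precedes it below -/
import Mathlib

section
/- Suppose γ₂ > 0 is the positive root of ((a² + a)c₁ + (1 + a)c₂)γ₂² + (a(αc₁ - q - λ) + αc₂ - q - λ)γ₂ - αq = 0, where a, α, q, λ, c₂ > 0, c₁ > c₂, and c₁ > λ/α. Then c₂γ₂² + (αc₂ - q - λ)γ₂ - αq < 0. In particular, setting γ₁ = aγ₂, the product of the two roots γ₁, γ₃ of the quadratic c₁γ² + (c₁ + c₂)γ₂γ + c₂γ₂² + (αc₁ - q - λ)γ + (αc₂ - q - λ)γ₂ - αq = 0 satisfies c₁γ₁γ₃ < 0, so γ₃ < 0 < γ₁. -/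
theorem product_of_roots_neg (a α q lam c₁ c₂ γ₂ γ₁ γ₃ : ℝ)
    (ha : 0 < a) (hα : 0 < α) (hq : 0 < q) (hlam : 0 < lam)
    (hc₂ : 0 < c₂) (hc : c₂ < c₁) (hnet : lam / α < c₁)
    (hγ₂pos : 0 < γ₂)
    (hγ₂root : ((a^2 + a) * c₁ + (1 + a) * c₂) * γ₂^2
        + (a * (α * c₁ - q - lam) + α * c₂ - q - lam) * γ₂ - α * q = 0)
    (hγ₁ : γ₁ = a * γ₂)
    (hγ₃root : c₁ * γ₃^2 + (c₁ + c₂) * γ₂ * γ₃ + c₂ * γ₂^2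
        + (α * c₁ - q - lam) * γ₃ + (α * c₂ - q - lam) * γ₂ - α * q = 0)
    (hγ₃ne : γ₃ ≠ γ₁) :
    c₂ * γ₂^2 + (α * c₂ - q - lam) * γ₂ - α * q < 0 ∧
    c₁ * γ₁ * γ₃ < 0 ∧ γ₃ < 0 ∧ 0 < γ₁ := by
  have hc₁ : (0:ℝ) < c₁ := hc₂.trans hc
  have hαc₁ : lam < α * c₁ := by
    have := (div_lt_iff₀ hα).mp hnet
    nlinarith
  have hB : 0 < (a + 1) * c₁ * γ₂ + c₂ * γ₂ + α * c₁ - q - lam := by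
    by_contra h
    push_neg at h
    have h1 : c₂ * γ₂ < q := by nlinarith [mul_pos hc₁ hγ₂pos, mul_pos (mul_pos ha hc₁) hγ₂pos]
    have h2 : 0 ≤ a * γ₂ * (-((a + 1) * c₁ * γ₂ + c₂ * γ₂ + α * c₁ - q - lam)) :=
      mul_nonneg (mul_pos ha hγ₂pos).le (by linarith)
    nlinarith [mul_pos hlam hγ₂pos, mul_pos hγ₂pos hα]
  have hC : c₂ * γ₂^2 + (α * c₂ - q - lam) * γ₂ - α * q < 0 := by
    nlinarith [mul_pos (mul_pos ha hγ₂pos) hB]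
  have hγ₁pos : 0 < γ₁ := hγ₁ ▸ mul_pos ha hγ₂pos
  have hsum : c₁ * (γ₃ + γ₁) + ((c₁ + c₂) * γ₂ + α * c₁ - q - lam) = 0 := by
    have hfac : (γ₃ - γ₁) * (c₁ * (γ₃ + γ₁) + ((c₁ + c₂) * γ₂ + α * c₁ - q - lam)) = 0 := by
      subst hγ₁
      linear_combination hγ₃root - hγ₂root
    rcases mul_eq_zero.mp hfac with h | h
    · exact absurd (by linarith : γ₃ = γ₁) hγ₃ne
    · exact h
  have hprod : c₁ * γ₁ * γ₃ = c₂ * γ₂^2 + (α * c₂ - q - lam) * γ₂ - α * q := by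
    linear_combination γ₃ * hsum - hγ₃root
  refine ⟨hC, by rw [hprod]; exact hC, ?_, hγ₁pos⟩
  have := hprod ▸ hC
  have hpos : 0 < c₁ * γ₁ := mul_pos hc₁ hγ₁pos
  by_contra h
  push_neg at h
  nlinarith
end

section
/- Under the same setup, defining γ₁ₖ = (-(c₁ + c₂)γ₂ₖ + λ + q - αc₁ + √Δₖ)/(2c₁) (the larger root), one has γ₁ₖ/γ₂ₖ → -c₂/c₁ as k → ∞; in particular γ₁ₖ → -∞. -/
open Filter Real

theorem ratio_gamma1_gamma2_tendsto (α lam q c₁ c₂ : ℝ) (γ₂ : ℕ → ℝ)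
    (hα : 0 < α) (hlam : 0 < lam) (hq : 0 < q)
    (hc₂ : 0 < c₂) (hc : c₂ < c₁)
    (hpos : ∀ k, 0 < γ₂ k)
    (htop : Filter.Tendsto γ₂ Filter.atTop Filter.atTop) :
    Filter.Tendsto (fun k =>
      ((-(c₁ + c₂) * γ₂ k + lam + q - α * c₁
        + Real.sqrt ((c₁ - c₂)^2 * (γ₂ k)^2
            + 2 * γ₂ k * (c₁ - c₂) * (α * c₁ + lam + q)
            + (α * c₁ - lam - q)^2 + 4 * c₁ * α * q)) / (2 * c₁)) / γ₂ k)
      Filter.atTop (nhds (-c₂ / c₁)) ∧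
    Filter.Tendsto (fun k =>
      (-(c₁ + c₂) * γ₂ k + lam + q - α * c₁
        + Real.sqrt ((c₁ - c₂)^2 * (γ₂ k)^2
            + 2 * γ₂ k * (c₁ - c₂) * (α * c₁ + lam + q)
            + (α * c₁ - lam - q)^2 + 4 * c₁ * α * q)) / (2 * c₁))
      Filter.atTop Filter.atBot := by
  have hc₁ : 0 < c₁ := hc₂.trans hc
  set A : ℝ := (c₁ - c₂)^2
  set B : ℝ := 2 * (c₁ - c₂) * (α * c₁ + lam + q)
  set C : ℝ := (α * c₁ - lam - q)^2 + 4 * c₁ * α * q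
  set g : ℝ → ℝ := fun u =>
    (-(c₁ + c₂) + (lam + q - α * c₁) * u + Real.sqrt (A + B * u + C * u^2)) / (2 * c₁)
    with hg
  have hgcont : Continuous g := by
    apply Continuous.div_const
    exact (continuous_const.add ((continuous_const.mul continuous_id))).add
      (Real.continuous_sqrt.comp (by continuity))
  have hg0 : g 0 = -c₂ / c₁ := by
    show (-(c₁ + c₂) + (lam + q - α * c₁) * 0 + Real.sqrt (A + B * 0 + C * 0^2)) / (2 * c₁)
        = -c₂ / c₁
    rw [show A + B * 0 + C * 0^2 = (c₁ - c₂)^2 by simp [A], Real.sqrt_sq (by linarith)]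
    field_simp
    ring
  have heq : ∀ k,
      ((-(c₁ + c₂) * γ₂ k + lam + q - α * c₁
        + Real.sqrt ((c₁ - c₂)^2 * (γ₂ k)^2
            + 2 * γ₂ k * (c₁ - c₂) * (α * c₁ + lam + q)
            + (α * c₁ - lam - q)^2 + 4 * c₁ * α * q)) / (2 * c₁)) / γ₂ k
      = g ((γ₂ k)⁻¹) := by
    intro k
    have hy := hpos k
    have hy' : γ₂ k ≠ 0 := ne_of_gt hy
    have hsq : Real.sqrt ((c₁ - c₂)^2 * (γ₂ k)^2
            + 2 * γ₂ k * (c₁ - c₂) * (α * c₁ + lam + q)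
            + (α * c₁ - lam - q)^2 + 4 * c₁ * α * q)
        = γ₂ k * Real.sqrt (A + B * (γ₂ k)⁻¹ + C * ((γ₂ k)⁻¹)^2) := by
      rw [show (c₁ - c₂)^2 * (γ₂ k)^2
            + 2 * γ₂ k * (c₁ - c₂) * (α * c₁ + lam + q)
            + (α * c₁ - lam - q)^2 + 4 * c₁ * α * q
          = (γ₂ k)^2 * (A + B * (γ₂ k)⁻¹ + C * ((γ₂ k)⁻¹)^2) by
        field_simp
        ring]
      rw [Real.sqrt_mul (sq_nonneg _), Real.sqrt_sq hy.le]
    rw [hsq, hg]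
    field_simp
    ring
  have hu : Tendsto (fun k => (γ₂ k)⁻¹) atTop (nhds 0) :=
    tendsto_inv_atTop_zero.comp htop
  have h1 : Tendsto (fun k => g ((γ₂ k)⁻¹)) atTop (nhds (-c₂ / c₁)) := by
    rw [← hg0]
    exact (hgcont.tendsto 0).comp hu
  have hratio : Filter.Tendsto (fun k =>
      ((-(c₁ + c₂) * γ₂ k + lam + q - α * c₁
        + Real.sqrt ((c₁ - c₂)^2 * (γ₂ k)^2
            + 2 * γ₂ k * (c₁ - c₂) * (α * c₁ + lam + q)
            + (α * c₁ - lam - q)^2 + 4 * c₁ * α * q)) / (2 * c₁)) / γ₂ k)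
      Filter.atTop (nhds (-c₂ / c₁)) := by
    simpa only [heq] using h1
  refine ⟨hratio, ?_⟩
  have hneg : -c₂ / c₁ < 0 := div_neg_of_neg_of_pos (by linarith) hc₁
  have h2 := hratio.neg_mul_atTop hneg htop
  apply h2.congr
  intro k
  exact div_mul_cancel₀ _ (hpos k).ne'
end

section
/- The scale function W^{(q)}(x) = c₂⁻¹(A₊ e^{q⁺x} - A₋ e^{q⁻x}) with A_± = (α + q^±)/(q⁺ - q⁻) satisfies the Laplace transform identity ∫₀^∞ e^{-θx} W^{(q)}(x) dx = 1/(ψ(θ) - q) for all θ > q⁺, where ψ(θ) = c₂θ - λθ/(α + θ). -/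
open MeasureTheory Set Filter Real

lemma integral_exp_neg_mul_Ioi_zero {b : ℝ} (hb : 0 < b) :
    ∫ x in Set.Ioi (0:ℝ), Real.exp (-b * x) = 1 / b := by
  have hb' : (-b : ℝ) < 0 := by linarith
  have hd : ∀ x ∈ Set.Ioi (0:ℝ), HasDerivAt (fun x => -Real.exp (-b * x) / b)
      (Real.exp (-b * x)) x := by
    intro x _
    have h1 : HasDerivAt (fun x : ℝ => -b * x) (-b) x := by
      simpa using (hasDerivAt_id x).const_mul (-b)
    have h2 := (h1.exp.neg).div_const b
    convert h2 using 1
    · rfl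
    · rfl
    · rfl
    field_simp
  have htm : Tendsto (fun x => -Real.exp (-b * x) / b) atTop (nhds 0) := by
    have h3 : Tendsto (fun x : ℝ => -b * x) atTop atBot :=
      Tendsto.const_mul_atTop_of_neg hb' tendsto_id
    have h4 := (Real.tendsto_exp_atBot.comp h3).neg.div_const b
    simpa using h4
  have h := MeasureTheory.integral_Ioi_of_hasDerivAt_of_tendsto
    (f := fun x => -Real.exp (-b * x) / b) (f' := fun x => Real.exp (-b * x))
    (a := 0) (m := 0)
    (Continuous.continuousWithinAt (by continuity)) hd
    (exp_neg_integrableOn_Ioi 0 hb) htm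
  rw [h]; field_simp; simp

theorem scale_function_laplace_transform (α lam c₂ q θ : ℝ)
    (hα : 0 < α) (hlam : 0 < lam) (hc₂ : 0 < c₂) (hq : 0 < q)
    (hθ : (q + lam - α * c₂ + Real.sqrt ((q + lam - α * c₂)^2 + 4 * c₂ * q * α)) / (2 * c₂) < θ) :
    let qp := (q + lam - α * c₂ + Real.sqrt ((q + lam - α * c₂)^2 + 4 * c₂ * q * α)) / (2 * c₂)
    let qm := (q + lam - α * c₂ - Real.sqrt ((q + lam - α * c₂)^2 + 4 * c₂ * q * α)) / (2 * c₂)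
    let Ap := (α + qp) / (qp - qm)
    let Am := (α + qm) / (qp - qm)
    let W : ℝ → ℝ := fun x => c₂⁻¹ * (Ap * Real.exp (qp * x) - Am * Real.exp (qm * x))
    let ψ : ℝ → ℝ := fun t => c₂ * t - lam * t / (α + t)
    (∫ x in Set.Ioi (0:ℝ), Real.exp (-θ * x) * W x) = 1 / (ψ θ - q) := by
  intro qp qm Ap Am W ψ
  set b := q + lam - α * c₂ with hb
  set s := Real.sqrt ((q + lam - α * c₂)^2 + 4 * c₂ * q * α) with hsdef
  have hDpos : 0 < (q + lam - α * c₂)^2 + 4 * c₂ * q * α := by positivity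
  have hs2 : s^2 = (q + lam - α * c₂)^2 + 4 * c₂ * q * α := Real.sq_sqrt hDpos.le
  have hspos : 0 < s := Real.sqrt_pos.mpr hDpos
  rw [← hb] at hs2
  have hbs : b < s := by nlinarith [hs2, hspos, mul_pos (mul_pos hc₂ hq) hα]
  have hbs' : -s < b := by nlinarith [hs2, hspos, mul_pos (mul_pos hc₂ hq) hα]
  have hqp : qp = (b + s)/(2*c₂) := rfl
  have hqm : qm = (b - s)/(2*c₂) := rfl
  have hqppos : 0 < qp := by rw [hqp]; apply div_pos <;> linarith
  have hqmneg : qm < 0 := by rw [hqm]; apply div_neg_of_neg_of_pos <;> linarith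
  have hθp : qp < θ := hθ
  have h1 : (0:ℝ) < θ - qp := by linarith
  have h2 : (0:ℝ) < θ - qm := by linarith
  have hdiff : 0 < qp - qm := by linarith
  have hαθ : 0 < α + θ := by linarith
  have hkey : ψ θ - q = c₂ * ((θ - qp) * (θ - qm)) / (α + θ) := by
    show c₂ * θ - lam * θ / (α + θ) - q = _
    rw [hqp, hqm]
    field_simp
    linear_combination (4*c₂*θ) * hb + hs2
  have hW : ∀ x : ℝ, Real.exp (-θ*x) * W x
      = c₂⁻¹*Ap*Real.exp (-(θ-qp)*x) - c₂⁻¹*Am*Real.exp (-(θ-qm)*x) := by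
    intro x
    show Real.exp (-θ*x) * (c₂⁻¹ * (Ap * Real.exp (qp*x) - Am * Real.exp (qm*x))) = _
    rw [show (-(θ-qp)*x) = -θ*x + qp*x by ring, show (-(θ-qm)*x) = -θ*x + qm*x by ring,
      Real.exp_add, Real.exp_add]
    ring
  have hi1 : MeasureTheory.IntegrableOn (fun x => c₂⁻¹*Ap*Real.exp (-(θ-qp)*x)) (Set.Ioi (0:ℝ)) :=
    (exp_neg_integrableOn_Ioi 0 h1).const_mul _
  have hi2 : MeasureTheory.IntegrableOn (fun x => c₂⁻¹*Am*Real.exp (-(θ-qm)*x)) (Set.Ioi (0:ℝ)) :=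
    (exp_neg_integrableOn_Ioi 0 h2).const_mul _
  simp only [hW]
  rw [MeasureTheory.integral_sub hi1 hi2, MeasureTheory.integral_const_mul,
    MeasureTheory.integral_const_mul, integral_exp_neg_mul_Ioi_zero h1,
    integral_exp_neg_mul_Ioi_zero h2, hkey]
  have hAp : Ap = (α + qp) / (qp - qm) := rfl
  have hAm : Am = (α + qm) / (qp - qm) := rfl
  rw [hAp, hAm]
  field_simp
  ring
end

section
/- Let γ₂ > 0 be the positive root of P(x) = ((a² + a)c₁ + (1 + a)c₂)x² + (a(αc₁ - q - λ) + αc₂ - q - λ)x - αq with a, α, q, λ, c₂ > 0, c₁ > c₂, c₁ > λ/α. Then γ₂ > a(λ + q - αc₁)/((a² + a)c₁ + ac₂); i.e., ((a² + a)c₁ + ac₂)γ₂ + a(αc₁ - q - λ) > 0. -/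
theorem gamma2_lower_bound (a α q lam c₁ c₂ γ₂ : ℝ)
    (ha : 0 < a) (hα : 0 < α) (hq : 0 < q) (hlam : 0 < lam)
    (hc₂ : 0 < c₂) (hc : c₂ < c₁) (hnet : lam / α < c₁)
    (hγ₂pos : 0 < γ₂)
    (hroot : ((a^2 + a) * c₁ + (1 + a) * c₂) * γ₂^2
        + (a * (α * c₁ - q - lam) + α * c₂ - q - lam) * γ₂ - α * q = 0) :
    a * (lam + q - α * c₁) / ((a^2 + a) * c₁ + a * c₂) < γ₂ ∧
    0 < ((a^2 + a) * c₁ + a * c₂) * γ₂ + a * (α * c₁ - q - lam) := by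
  have hac : lam < α * c₁ := by
    have := (div_lt_iff₀ hα).mp hnet
    linarith [this]
  have hD : 0 < (a^2 + a) * c₁ + a * c₂ := by nlinarith
  have hE : 0 < ((a^2 + a) * c₁ + a * c₂) * γ₂ + a * (α * c₁ - q - lam) := by
    by_contra h
    push_neg at h
    -- from E ≤ 0 and D γ₂ > 0: q + lam - α c₁ > 0
    have h1 : 0 < q + lam - α * c₁ := by nlinarith [mul_pos hD hγ₂pos]
    -- c₂ γ₂ < q
    have h2 : c₂ * γ₂ < q := by
      nlinarith [mul_nonpos_of_nonneg_of_nonpos hc₂.le h,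
        mul_pos (mul_pos ha hc₂) (sub_pos.mpr hac),
        mul_pos (mul_pos ha hq) (add_pos ha one_pos),
        mul_pos hD hγ₂pos, mul_pos hq ha, mul_pos hc₂ hγ₂pos,
        mul_pos (mul_pos ha hc₂) hγ₂pos,
        mul_pos hD hq]
    -- f(γ₂) = γ₂ * E ≤ 0 from hroot, but f(γ₂) > 0
    nlinarith [mul_pos hα (sub_pos.mpr h2), mul_pos hγ₂pos (sub_pos.mpr h2),
      mul_pos hlam hγ₂pos, mul_nonpos_of_nonneg_of_nonpos (le_of_lt hγ₂pos) h]
  refine ⟨?_, hE⟩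
  rw [div_lt_iff₀ hD]
  linarith
end

section
/- For a sequence defined by the recursion γ₂,ₖ₊₁ = larger root of the quadratic (in x) A·x² + [(γ₃,ₖ - aγ₂,ₖ)(2c₁a + c₁ + c₂) - (λ + q)(1 + a) + α(ac₁ + c₂)]x + c₁(γ₃,ₖ - aγ₂,ₖ)² + (c₁α - λ - q)(γ₃,ₖ - aγ₂,ₖ) - αq, where A = (a² + a)c₁ + (1 + a)c₂ and γ₃,ₖ is the smaller root associated to γ₂,ₖ via c₁γ² + (c₁+c₂)γ₂,ₖγ + c₂γ₂,ₖ² + (αc₁ - q - λ)γ + (αc₂ - q - λ)γ₂,ₖ - αq = 0, the ratio γ₂,ₖ₊₁/γ₂,ₖ converges to (ac₁ + c₁)/(ac₁ + c₂) > 1 as γ₂,ₖ → ∞, assuming a, α, λ, q > 0 and c₁ > c₂ > 0. -/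
noncomputable def sIf (α lam q c₁ c₂ t : ℝ) : ℝ :=
  Real.sqrt ((c₁ - c₂)^2 + 2*(c₁-c₂)*(α*c₁+lam+q)*t
    + ((α*c₁-lam-q)^2 + 4*c₁*α*q)*t^2)

noncomputable def gf (a α lam q c₁ c₂ t : ℝ) : ℝ :=
  (-(c₁+c₂) + (lam+q-α*c₁)*t - sIf α lam q c₁ c₂ t)/(2*c₁) - a

noncomputable def Bf (a α lam q c₁ c₂ t : ℝ) : ℝ :=
  gf a α lam q c₁ c₂ t * (2*c₁*a+c₁+c₂) + (-((lam+q)*(1+a)) + α*(a*c₁+c₂))*t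

noncomputable def Cf (a α lam q c₁ c₂ t : ℝ) : ℝ :=
  c₁ * (gf a α lam q c₁ c₂ t)^2 + (c₁*α-lam-q)*(gf a α lam q c₁ c₂ t)*t - α*q*t^2

noncomputable def Ff (a α lam q c₁ c₂ t : ℝ) : ℝ :=
  (-(Bf a α lam q c₁ c₂ t)
    + Real.sqrt ((Bf a α lam q c₁ c₂ t)^2
        - 4*((a^2+a)*c₁+(1+a)*c₂)*(Cf a α lam q c₁ c₂ t)))
  / (2*((a^2+a)*c₁+(1+a)*c₂))

lemma Ff_cont (a α lam q c₁ c₂ : ℝ) : Continuous (Ff a α lam q c₁ c₂) := by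
  have hs : Continuous (sIf α lam q c₁ c₂) := by
    unfold sIf
    exact Continuous.sqrt (by continuity)
  have hg : Continuous (gf a α lam q c₁ c₂) := by
    unfold gf; fun_prop
  have hB : Continuous (Bf a α lam q c₁ c₂) := by
    unfold Bf; fun_prop
  have hC : Continuous (Cf a α lam q c₁ c₂) := by
    unfold Cf; fun_prop
  unfold Ff; fun_prop

theorem ratio_gamma2_recursion_tendsto (a α lam q c₁ c₂ : ℝ)
    (γ₂ : ℕ → ℝ) (γ₃ : ℕ → ℝ) (γ₂' : ℕ → ℝ)
    (ha : 0 < a) (hα : 0 < α) (hlam : 0 < lam) (hq : 0 < q)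
    (hc₂ : 0 < c₂) (hc : c₂ < c₁)
    (hpos : ∀ k, 0 < γ₂ k)
    (htop : Filter.Tendsto γ₂ Filter.atTop Filter.atTop)
    (hγ₃ : ∀ k, γ₃ k =
      (-(c₁ + c₂) * γ₂ k + lam + q - α * c₁
        - Real.sqrt ((c₁ - c₂)^2 * (γ₂ k)^2
            + 2 * γ₂ k * (c₁ - c₂) * (α * c₁ + lam + q)
            + (α * c₁ - lam - q)^2 + 4 * c₁ * α * q)) / (2 * c₁))
    (hγ₂' : ∀ k, γ₂' k =
      (-((γ₃ k - a * γ₂ k) * (2 * c₁ * a + c₁ + c₂) - (lam + q) * (1 + a)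
          + α * (a * c₁ + c₂))
        + Real.sqrt (((γ₃ k - a * γ₂ k) * (2 * c₁ * a + c₁ + c₂)
              - (lam + q) * (1 + a) + α * (a * c₁ + c₂))^2
            - 4 * ((a^2 + a) * c₁ + (1 + a) * c₂)
              * (c₁ * (γ₃ k - a * γ₂ k)^2
                + (c₁ * α - lam - q) * (γ₃ k - a * γ₂ k) - α * q)))
        / (2 * ((a^2 + a) * c₁ + (1 + a) * c₂))) :
    Filter.Tendsto (fun k => γ₂' k / γ₂ k) Filter.atTop
      (nhds ((a * c₁ + c₁) / (a * c₁ + c₂))) ∧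
    1 < (a * c₁ + c₁) / (a * c₁ + c₂) := by
  have hc₁ : 0 < c₁ := hc₂.trans hc
  have hApos : 0 < (a^2 + a) * c₁ + (1 + a) * c₂ := by nlinarith
  -- pointwise identity
  have key : ∀ k, γ₂' k / γ₂ k = Ff a α lam q c₁ c₂ ((γ₂ k)⁻¹) := by
    intro k
    have hxpos : 0 < γ₂ k := hpos k
    have hxne : γ₂ k ≠ 0 := hxpos.ne'
    obtain ⟨t, hxt, ht⟩ : ∃ t, γ₂ k * t = 1 ∧ (γ₂ k)⁻¹ = t :=
      ⟨(γ₂ k)⁻¹, mul_inv_cancel₀ hxne, rfl⟩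
    rw [ht]
    set x := γ₂ k with hx
    have h1 : (c₁ - c₂)^2 * x^2 + 2 * x * (c₁ - c₂) * (α * c₁ + lam + q)
        + (α * c₁ - lam - q)^2 + 4 * c₁ * α * q
        = x^2 * ((c₁ - c₂)^2 + 2*(c₁-c₂)*(α*c₁+lam+q)*t
            + ((α*c₁-lam-q)^2 + 4*c₁*α*q)*t^2) := by
      linear_combination (-(2*(c₁-c₂)*(α*c₁+lam+q)*x)
        - ((α*c₁-lam-q)^2+4*c₁*α*q)*(x*t+1)) * hxt
    have h2 : Real.sqrt ((c₁ - c₂)^2 * x^2 + 2 * x * (c₁ - c₂) * (α * c₁ + lam + q)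
        + (α * c₁ - lam - q)^2 + 4 * c₁ * α * q) = x * sIf α lam q c₁ c₂ t := by
      unfold sIf
      rw [h1, Real.sqrt_mul (sq_nonneg x), Real.sqrt_sq hxpos.le]
    have h3 : γ₃ k - a * x = x * gf a α lam q c₁ c₂ t := by
      unfold gf
      rw [hγ₃ k, ← hx, h2]
      linear_combination (-(lam+q-α*c₁)/(2*c₁)) * hxt
    have h4 : (γ₃ k - a * x) * (2 * c₁ * a + c₁ + c₂) - (lam + q) * (1 + a)
        + α * (a * c₁ + c₂) = x * Bf a α lam q c₁ c₂ t := by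
      unfold Bf
      rw [h3]
      linear_combination ((lam+q)*(1+a) - α*(a*c₁+c₂)) * hxt
    have h5 : c₁ * (γ₃ k - a * x)^2 + (c₁ * α - lam - q) * (γ₃ k - a * x) - α * q
        = x^2 * Cf a α lam q c₁ c₂ t := by
      unfold Cf
      rw [h3]
      linear_combination (-((c₁*α-lam-q)*(x*(gf a α lam q c₁ c₂ t)))
        + α*q*(x*t+1)) * hxt
    have h6 : Real.sqrt ((x * Bf a α lam q c₁ c₂ t)^2
        - 4 * ((a^2 + a) * c₁ + (1 + a) * c₂) * (x^2 * Cf a α lam q c₁ c₂ t))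
        = x * Real.sqrt ((Bf a α lam q c₁ c₂ t)^2
            - 4*((a^2+a)*c₁+(1+a)*c₂)*(Cf a α lam q c₁ c₂ t)) := by
      rw [show (x * Bf a α lam q c₁ c₂ t)^2
          - 4 * ((a^2 + a) * c₁ + (1 + a) * c₂) * (x^2 * Cf a α lam q c₁ c₂ t)
          = x^2 * ((Bf a α lam q c₁ c₂ t)^2
            - 4*((a^2+a)*c₁+(1+a)*c₂)*(Cf a α lam q c₁ c₂ t)) from by ring,
        Real.sqrt_mul (sq_nonneg x), Real.sqrt_sq hxpos.le]
    rw [hγ₂' k, ← hx, h4, h5, h6]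
    unfold Ff
    field_simp
  -- value at 0
  have hsI0 : sIf α lam q c₁ c₂ 0 = c₁ - c₂ := by
    unfold sIf
    rw [show (c₁ - c₂)^2 + 2*(c₁-c₂)*(α*c₁+lam+q)*0
        + ((α*c₁-lam-q)^2 + 4*c₁*α*q)*0^2 = (c₁-c₂)^2 from by ring,
      Real.sqrt_sq (by linarith)]
  have hg0 : gf a α lam q c₁ c₂ 0 = -(1+a) := by
    unfold gf
    rw [hsI0]
    field_simp
    ring
  have hB0 : Bf a α lam q c₁ c₂ 0 = -((1+a)*(2*c₁*a+c₁+c₂)) := by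
    unfold Bf; rw [hg0]; ring
  have hC0 : Cf a α lam q c₁ c₂ 0 = c₁ * (1+a)^2 := by
    unfold Cf; rw [hg0]; ring
  have hF0 : Ff a α lam q c₁ c₂ 0 = (a * c₁ + c₁) / (a * c₁ + c₂) := by
    unfold Ff
    rw [hB0, hC0,
      show (-((1+a)*(2*c₁*a+c₁+c₂)))^2
          - 4*((a^2+a)*c₁+(1+a)*c₂)*(c₁ * (1+a)^2) = ((1+a)*(c₁-c₂))^2 from by ring,
      Real.sqrt_sq (by nlinarith)]
    rw [div_eq_div_iff (by positivity) (by positivity)]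
    ring
  constructor
  · have hinv : Filter.Tendsto (fun k => (γ₂ k)⁻¹) Filter.atTop (nhds 0) := by
      exact htop.inv_tendsto_atTop
    have h := ((Ff_cont a α lam q c₁ c₂).tendsto 0).comp hinv
    rw [hF0] at h
    have heq : (fun k => γ₂' k / γ₂ k)
        = fun k => Ff a α lam q c₁ c₂ ((γ₂ k)⁻¹) := funext key
    rw [heq]
    exact h
  · rw [lt_div_iff₀ (by positivity)]
    nlinarith
end
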